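/- Let P be a profile and define the graph H_P with vertex set V(P) ∪ {x_s : s ∈ L(P)} (one new vertex per species), edges E(P) together with edges (u, x_s) for each leaf u labeled s. For any valid subset U of V(P), let H_P(U) be the subgraph induced by all descendants of nodes of U together with {x_s : s ∈ L(U)}. Then two nodes u, v ∈ U lie in the same connected component of the intersection graph G_P(U) if and only if they lie in the same connected component of H_P(U). -/

import Mathlib

attribute [local instance] Classical.propDecidable

/-- A rooted phylogenetic tree on a finite species set, represented by its
(laminar) family of clusters, which contains the full leaf set and all
singletons.  By the classical correspondence, such families are exactly the
cluster sets of rooted phylogenetic trees (internal nodes with ≥ 2 children). -/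
structure PhyloTree (S : Type) [DecidableEq S] where
  leaves : Finset S
  clusters : Finset (Finset S)
  leaves_nonempty : leaves.Nonempty
  leaves_mem : leaves ∈ clusters
  singleton_mem : ∀ x ∈ leaves, ({x} : Finset S) ∈ clusters
  subset_leaves : ∀ C ∈ clusters, C ⊆ leaves
  nonempty_mem : ∀ C ∈ clusters, C.Nonempty
  laminar : ∀ C ∈ clusters, ∀ D ∈ clusters, C ∩ D = ∅ ∨ C ⊆ D ∨ D ⊆ C

variable {S : Type} [DecidableEq S]

/-- Restriction of a family of clusters to a subset `A` of species:
`{C ∩ A : C ∈ H, C ∩ A ≠ ∅}`. -/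
def restrictFam (H : Finset (Finset S)) (A : Finset S) : Finset (Finset S) :=
  (H.image (fun C => C ∩ A)).filter (fun C => C.Nonempty)

/-- The cluster set of the restriction `T|A`. -/
def restrictClusters (T : PhyloTree S) (A : Finset S) : Finset (Finset S) :=
  restrictFam T.clusters A

/-- `T` displays `T'`: every cluster of `T'` is a cluster of `T|L(T')`. -/
def Displays (T T' : PhyloTree S) : Prop :=
  T'.clusters ⊆ restrictClusters T T'.leaves

/-- `T` induces the rooted triple `ab|c`: the restriction of `T` to `{a,b,c}`
is binary with `a,b` separated from `c`, i.e. `{a,b}` is a cluster of it. -/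
def Triple (T : PhyloTree S) (a b c : S) : Prop :=
  a ∈ T.leaves ∧ b ∈ T.leaves ∧ c ∈ T.leaves ∧ a ≠ b ∧ a ≠ c ∧ b ≠ c ∧
    ({a, b} : Finset S) ∈ restrictClusters T ({a, b, c} : Finset S)

/-- A node of the profile `P` is a pair `(i, C)` with `C` a cluster (= node) of `T i`. -/
def NodeOf {k : ℕ} (P : Fin k → PhyloTree S) (u : Fin k × Finset S) : Prop :=
  u.2 ∈ (P u.1).clusters

/-- `L(U)`: the union of the clusters of the nodes in `U`. -/
def LofU {k : ℕ} (U : Finset (Fin k × Finset S)) : Finset S :=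
  U.sup (fun u => u.2)

/-- `U(i) = U ∩ V(T_i)`, as the set of clusters of the nodes of `U` in tree `i`. -/
def Ui {k : ℕ} (U : Finset (Fin k × Finset S)) (i : Fin k) : Finset (Finset S) :=
  (U.filter (fun u => u.1 = i)).image (fun u => u.2)

/-- Node (cluster) `C` is a child of node (cluster) `D` in `T`. -/
def IsChild (T : PhyloTree S) (C D : Finset S) : Prop :=
  C ∈ T.clusters ∧ D ∈ T.clusters ∧ C ⊂ D ∧
    ∀ E ∈ T.clusters, C ⊂ E → E ⊂ D → False

/-- The set of children (clusters) of the node with cluster `C` in `T`. -/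
noncomputable def ChildrenOf (T : PhyloTree S) (C : Finset S) : Finset (Finset S) :=
  T.clusters.filter (fun D => IsChild T D C)

/-- `U` is a valid (nonempty) subset of `V(P)`. -/
def Valid {k : ℕ} (P : Fin k → PhyloTree S) (U : Finset (Fin k × Finset S)) : Prop :=
  U.Nonempty ∧
  (∀ u ∈ U, NodeOf P u) ∧
  (∀ i : Fin k, 2 ≤ (Ui U i).card →
    ∃ D ∈ (P i).clusters, ∀ C ∈ Ui U i, IsChild (P i) C D) ∧
  (∀ i : Fin k, (Ui U i).sup id = (P i).leaves ∩ LofU U)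

/-- `U` is compatible: some tree on `L(U)` displays `T_i|L(U)` for every `i`. -/
def CompatU {k : ℕ} (P : Fin k → PhyloTree S) (U : Finset (Fin k × Finset S)) : Prop :=
  ∃ T : PhyloTree S, T.leaves = LofU U ∧
    ∀ i : Fin k, restrictClusters (P i) (LofU U) ⊆
      restrictClusters T ((P i).leaves ∩ LofU U)

/-- The profile `P` is compatible: some tree on `L(P)` displays every `T_i`. -/
def CompatP {k : ℕ} (P : Fin k → PhyloTree S) : Prop :=
  ∃ T : PhyloTree S, T.leaves = Finset.univ.sup (fun i => (P i).leaves) ∧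
    ∀ i : Fin k, Displays T (P i)

/-- Edge `(a,b)` of the triplet graph of the restricted profile `P|A`:
some restricted tree `T_i|A` induces a rooted triple `ab|c`. -/
def TGEdge {k : ℕ} (P : Fin k → PhyloTree S) (A : Finset S) (a b : S) : Prop :=
  a ≠ b ∧ ∃ i : Fin k, ∃ c : S, c ∈ (P i).leaves ∩ A ∧ c ≠ a ∧ c ≠ b ∧
    ∃ C ∈ restrictClusters (P i) A, a ∈ C ∧ b ∈ C ∧ c ∉ C

/-- Adjacency (within `U`) of the intersection graph `G_P(U)`. -/
def GPadj {k : ℕ} (U : Finset (Fin k × Finset S))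
    (u v : Fin k × Finset S) : Prop :=
  u ∈ U ∧ v ∈ U ∧ (u.2 ∩ v.2).Nonempty

/-- Vertices of the graph `H_P(U)`: nodes of trees of `P` that are descendants
of a node of `U` (a node is a descendant of itself), together with the species
vertices `x_s` for `s ∈ L(U)`. -/
def InHU {k : ℕ} (P : Fin k → PhyloTree S) (U : Finset (Fin k × Finset S)) :
    (Fin k × Finset S) ⊕ S → Prop
  | Sum.inl u => NodeOf P u ∧ ∃ w ∈ U, w.1 = u.1 ∧ u.2 ⊆ w.2
  | Sum.inr s => s ∈ LofU U

/-- Adjacency in `H_P(U)`: tree edges (parent–child pairs) between vertices of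
`H_P(U)`, plus edges joining each leaf to the species vertex of its label. -/
def HAdjU {k : ℕ} (P : Fin k → PhyloTree S) (U : Finset (Fin k × Finset S)) :
    (Fin k × Finset S) ⊕ S → (Fin k × Finset S) ⊕ S → Prop
  | Sum.inl u, Sum.inl v =>
      InHU P U (Sum.inl u) ∧ InHU P U (Sum.inl v) ∧ u.1 = v.1 ∧
        (IsChild (P u.1) u.2 v.2 ∨ IsChild (P u.1) v.2 u.2)
  | Sum.inl u, Sum.inr s =>
      InHU P U (Sum.inl u) ∧ InHU P U (Sum.inr s) ∧ u.2 = {s}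
  | Sum.inr s, Sum.inl u =>
      InHU P U (Sum.inl u) ∧ InHU P U (Sum.inr s) ∧ u.2 = {s}
  | Sum.inr _, Sum.inr _ => False

/-- **Lemma 6(ii).** For a valid `U`, two nodes `u, v ∈ U` are
in the same connected component of the intersection graph `G_P(U)` iff they
are in the same connected component of `H_P(U)`. -/
lemma exists_child_mem (T : PhyloTree S) (C : Finset S) (hC : C ∈ T.clusters)
    (s : S) (hs : s ∈ C) (hne : ({s} : Finset S) ≠ C) :
    ∃ E, IsChild T E C ∧ s ∈ E := by
  classical
  set F := T.clusters.filter (fun E => s ∈ E ∧ E ⊂ C) with hF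
  have hsingF : ({s} : Finset S) ∈ F := by
    refine Finset.mem_filter.2 ⟨T.singleton_mem s (T.subset_leaves C hC hs), ?_, ?_⟩
    · exact Finset.mem_singleton_self s
    · exact lt_of_le_of_ne (Finset.singleton_subset_iff.2 hs) hne
  obtain ⟨E, hEF, hEmax⟩ := F.exists_max_image (fun E => E.card) ⟨_, hsingF⟩
  obtain ⟨hEcl, hsE, hEC⟩ := Finset.mem_filter.1 hEF
  refine ⟨E, ⟨hEcl, hC, hEC, ?_⟩, hsE⟩
  intro E' hE' hEE' hE'C
  have hE'F : E' ∈ F := Finset.mem_filter.2 ⟨hE', hEE'.subset hsE, hE'C⟩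
  have := hEmax E' hE'F
  exact absurd (Finset.card_lt_card hEE') (by omega)

lemma hadj_symm {k : ℕ} (P : Fin k → PhyloTree S) (U : Finset (Fin k × Finset S)) :
    Symmetric (HAdjU P U) := by
  intro x y h
  cases x with
  | inl u => cases y with
    | inl v =>
      obtain ⟨h1, h2, h3, h4⟩ := h
      exact ⟨h2, h1, h3.symm, by rw [← h3]; exact h4.symm⟩
    | inr s => exact h
  | inr s => cases y with
    | inl v => exact h
    | inr t => exact h.elim

lemma descend {k : ℕ} (P : Fin k → PhyloTree S) (U : Finset (Fin k × Finset S)) :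
    ∀ n (w : Fin k × Finset S), w.2.card ≤ n → InHU P U (Sum.inl w) →
      ∀ s ∈ w.2, Relation.ReflTransGen (HAdjU P U) (Sum.inl w) (Sum.inr s) := by
  intro n
  induction n with
  | zero =>
    intro w hcard _ s hs
    have : w.2 = ∅ := Finset.card_eq_zero.1 (le_antisymm hcard (Nat.zero_le _))
    simp [this] at hs
  | succ n ih =>
    intro w hcard hw s hs
    obtain ⟨hnode, p, hpU, hpi, hsub⟩ := hw
    have hsL : s ∈ LofU U := Finset.mem_sup.2 ⟨p, hpU, hsub hs⟩
    by_cases hsing : w.2 = {s}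
    · exact Relation.ReflTransGen.single
        (show HAdjU P U (Sum.inl w) (Sum.inr s) from
          ⟨⟨hnode, p, hpU, hpi, hsub⟩, hsL, hsing⟩)
    · have hne : ({s} : Finset S) ≠ w.2 := fun h => hsing h.symm
      obtain ⟨E, hchild, hsE⟩ := exists_child_mem (P w.1) w.2 hnode s hs hne
      have hw' : InHU P U (Sum.inl (w.1, E)) :=
        ⟨hchild.1, p, hpU, hpi, hchild.2.2.1.subset.trans hsub⟩
      have hcardE : E.card ≤ n := by
        have := Finset.card_lt_card hchild.2.2.1
        omega
      have hpath := ih (w.1, E) hcardE hw' s hsE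
      exact Relation.ReflTransGen.head
        (show HAdjU P U (Sum.inl w) (Sum.inl (w.1, E)) from
          ⟨⟨hnode, p, hpU, hpi, hsub⟩, hw', rfl, Or.inr hchild⟩) hpath

/-- The cluster associated to a vertex of `H_P(U)`. -/
def S0 {k : ℕ} : (Fin k × Finset S) ⊕ S → Finset S
  | Sum.inl w => w.2
  | Sum.inr s => {s}

lemma S0_nonempty {k : ℕ} (P : Fin k → PhyloTree S) (U : Finset (Fin k × Finset S))
    (x : (Fin k × Finset S) ⊕ S) (hx : InHU P U x) : (S0 x).Nonempty := by
  cases x with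
  | inl w => exact (P w.1).nonempty_mem w.2 hx.1
  | inr s => exact ⟨s, Finset.mem_singleton_self s⟩

lemma cover_exists {k : ℕ} (P : Fin k → PhyloTree S) (U : Finset (Fin k × Finset S))
    (x : (Fin k × Finset S) ⊕ S) (hx : InHU P U x) : ∃ p ∈ U, S0 x ⊆ p.2 := by
  cases x with
  | inl w =>
    obtain ⟨_, p, hpU, _, hsub⟩ := hx
    exact ⟨p, hpU, hsub⟩
  | inr s =>
    obtain ⟨p, hpU, hsp⟩ := Finset.mem_sup.1 hx
    exact ⟨p, hpU, Finset.singleton_subset_iff.2 hsp⟩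

lemma edge_data {k : ℕ} (P : Fin k → PhyloTree S) (U : Finset (Fin k × Finset S))
    {x y : (Fin k × Finset S) ⊕ S} (h : HAdjU P U x y) :
    InHU P U x ∧ InHU P U y ∧ (S0 x ⊆ S0 y ∨ S0 y ⊆ S0 x) := by
  cases x with
  | inl u => cases y with
    | inl v =>
      obtain ⟨h1, h2, _, h4⟩ := h
      refine ⟨h1, h2, ?_⟩
      cases h4 with
      | inl hc => exact Or.inl hc.2.2.1.subset
      | inr hc => exact Or.inr hc.2.2.1.subset
    | inr s =>
      obtain ⟨h1, h2, h3⟩ := h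
      exact ⟨h1, h2, Or.inl (le_of_eq h3)⟩
  | inr s => cases y with
    | inl v =>
      obtain ⟨h1, h2, h3⟩ := h
      exact ⟨h2, h1, Or.inr (le_of_eq h3)⟩
    | inr t => exact h.elim

theorem stmt12 {k : ℕ} (P : Fin k → PhyloTree S)
    (U : Finset (Fin k × Finset S)) (hU : Valid P U)
    (u v : Fin k × Finset S) (hu : u ∈ U) (hv : v ∈ U) :
    Relation.ReflTransGen (GPadj U) u v ↔
      Relation.ReflTransGen (HAdjU P U) (Sum.inl u) (Sum.inl v) := by
  constructor
  · -- forward: G-path gives H-path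
    intro h
    induction h with
    | refl => exact Relation.ReflTransGen.refl
    | @tail b c hb hbc ih =>
      obtain ⟨hbU, hcU, s, hs⟩ := hbc
      have hsb : s ∈ b.2 := (Finset.mem_inter.1 hs).1
      have hsc : s ∈ c.2 := (Finset.mem_inter.1 hs).2
      have hIb : InHU P U (Sum.inl b) := ⟨hU.2.1 b hbU, b, hbU, rfl, le_refl _⟩
      have hIc : InHU P U (Sum.inl c) := ⟨hU.2.1 c hcU, c, hcU, rfl, le_refl _⟩
      have p1 := descend P U b.2.card b (le_refl _) hIb s hsb
      have p2 := descend P U c.2.card c (le_refl _) hIc s hsc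
      haveI : Std.Symm (HAdjU P U) := ⟨hadj_symm P U⟩
      have p2' := Std.Symm.symm _ _ p2
      exact (ih hbU).trans (p1.trans p2')
  · -- backward: H-path gives G-path
    intro h
    have key : ∀ x, Relation.ReflTransGen (HAdjU P U) (Sum.inl u) x →
        ∃ p ∈ U, S0 x ⊆ p.2 ∧ Relation.ReflTransGen (GPadj U) u p := by
      intro x hx
      induction hx with
      | refl => exact ⟨u, hu, subset_rfl, Relation.ReflTransGen.refl⟩
      | tail hb hbc ih =>
        obtain ⟨p, hpU, hpx, hup⟩ := ih
        obtain ⟨hIb, hIc, hcmp⟩ := edge_data P U hbc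
        obtain ⟨q, hqU, hqc⟩ := cover_exists P U _ hIc
        have hne : (p.2 ∩ q.2).Nonempty := by
          cases hcmp with
          | inl hbc' =>
            obtain ⟨t, ht⟩ := S0_nonempty P U _ hIb
            exact ⟨t, Finset.mem_inter.2 ⟨hpx ht, hqc (hbc' ht)⟩⟩
          | inr hcb =>
            obtain ⟨t, ht⟩ := S0_nonempty P U _ hIc
            exact ⟨t, Finset.mem_inter.2 ⟨hpx (hcb ht), hqc ht⟩⟩
        exact ⟨q, hqU, hqc, hup.tail ⟨hpU, hqU, hne⟩⟩
    obtain ⟨p, hpU, hpv, hup⟩ := key (Sum.inl v) h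
    have hvne : v.2.Nonempty := (P v.1).nonempty_mem v.2 (hU.2.1 v hv)
    have : (p.2 ∩ v.2).Nonempty := by
      obtain ⟨t, ht⟩ := hvne
      exact ⟨t, Finset.mem_inter.2 ⟨hpv ht, ht⟩⟩
    exact hup.tail ⟨hpU, hv, this⟩
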